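/- Let 0 < ε ≤ 1 − √(2(1 − cos(2π/7))). There do not exist points p_0, p_1, …, p_7 in ℝ² and radii r_0, r_1, …, r_7 with r_i ∈ (1−ε, 1+ε) for all i, such that ‖p_i − p_j‖ ≥ r_i + r_j for all i ≠ j, and ‖p_0 − p_i‖ = r_0 + r_i for all i ∈ {1,…,7}. Consequently, the maximum degree in an ε-interval radii penny graph is at most 6. -/

import Mathlib

private lemma cos_lt_cos_aux (δ x : ℝ) (hδ0 : 0 < δ) (hδπ : δ < Real.pi)
    (hx : |x| < 2 * Real.pi) (h : Real.cos x < Real.cos δ) :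
    δ < |x| ∧ |x| < 2 * Real.pi - δ := by
  constructor
  · by_contra h'
    push_neg at h'
    have := Real.cos_le_cos_of_nonneg_of_le_pi (abs_nonneg x) hδπ.le h'
    rw [Real.cos_abs] at this
    linarith
  · by_contra h'
    push_neg at h'
    have h0 : 0 ≤ 2 * Real.pi - |x| := by linarith
    have h1 : 2 * Real.pi - |x| ≤ δ := by linarith
    have h2 := Real.cos_le_cos_of_nonneg_of_le_pi h0 hδπ.le h1
    have h3 : Real.cos (2 * Real.pi - |x|) = Real.cos x := by
      rw [Real.cos_two_pi_sub, Real.cos_abs]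
    linarith

private lemma penny_scalar (ε c r0 ri rj : ℝ) (hε : 0 < ε) (hc0 : 0 ≤ c) (hcε : c ≤ 1 - ε)
    (h0 : 1 - ε < r0) (h0' : r0 < 1 + ε) (hi : 1 - ε < ri) (hi' : ri < 1 + ε)
    (hj : 1 - ε < rj) (hj' : rj < 1 + ε) :
    c ^ 2 * ((r0 + ri) * (r0 + rj)) < 4 * (ri * rj) := by
  have hε1 : ε ≤ 1 := by linarith
  have hri : 0 < ri := by linarith
  have hrj : 0 < rj := by linarith
  have hr0 : 0 < r0 := by linarith
  have h1 : c * (r0 + ri) < 2 * ri := by nlinarith [mul_nonneg hc0 (by linarith : (0:ℝ) ≤ 1 + ε - r0), mul_nonneg hc0 hε.le]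
  have h2 : c * (r0 + rj) < 2 * rj := by nlinarith [mul_nonneg hc0 (by linarith : (0:ℝ) ≤ 1 + ε - r0), mul_nonneg hc0 hε.le]
  have h3 : 0 ≤ c * (r0 + ri) := mul_nonneg hc0 (by linarith)
  have h4 : 0 ≤ c * (r0 + rj) := mul_nonneg hc0 (by linarith)
  nlinarith [mul_lt_mul'' h1 h2 h3 h4]

set_option maxHeartbeats 1000000 in
/-- For `0 < ε ≤ 1 - √(2(1 - cos(2π/7)))`, there is no configuration of 8 pennies with
radii in `(1-ε, 1+ε)`, pairwise disjoint interiors, in which the penny `p 0` touches all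
7 others. Consequently the maximum degree in an `ε`-interval radii penny graph is at
most 6. -/
theorem interval_radii_penny_max_degree (ε : ℝ) (hε : 0 < ε)
    (hε' : ε ≤ 1 - Real.sqrt (2 * (1 - Real.cos (2 * Real.pi / 7)))) :
    ¬ ∃ (p : Fin 8 → EuclideanSpace ℝ (Fin 2)) (r : Fin 8 → ℝ),
      (∀ i, r i ∈ Set.Ioo (1 - ε) (1 + ε)) ∧
      (∀ i j, i ≠ j → r i + r j ≤ ‖p i - p j‖) ∧
      (∀ i, i ≠ 0 → ‖p 0 - p i‖ = r 0 + r i) := by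
  rintro ⟨p, r, hr, hsep, htouch⟩
  have hπ := Real.pi_pos
  set δ : ℝ := 2 * Real.pi / 7 with hδdef
  have hδ0 : 0 < δ := by positivity
  have hδπ : δ < Real.pi := by rw [hδdef]; nlinarith
  set c : ℝ := Real.sqrt (2 * (1 - Real.cos δ)) with hcdef
  have hc0 : 0 ≤ c := Real.sqrt_nonneg _
  have hc2 : c ^ 2 = 2 * (1 - Real.cos δ) :=
    Real.sq_sqrt (by nlinarith [Real.cos_le_one δ])
  have hcε : c ≤ 1 - ε := by linarith
  have hε1 : ε ≤ 1 := by linarith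
  have hrpos : ∀ i, 0 < r i := fun i => by
    have := (hr i).1; linarith
  -- norms of vectors in coordinates
  have hnorm : ∀ x : EuclideanSpace ℝ (Fin 2), ‖x‖ ^ 2 = (x 0) ^ 2 + (x 1) ^ 2 := by
    intro x
    rw [EuclideanSpace.norm_eq, Real.sq_sqrt (by positivity)]
    simp [Fin.sum_univ_two, sq_abs]
  have hd : ∀ i : Fin 8, i ≠ 0 → ‖p i - p 0‖ = r 0 + r i := by
    intro i hi
    rw [norm_sub_rev]
    exact htouch i hi
  have hd2 : ∀ i : Fin 8, i ≠ 0 →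
      ((p i - p 0) 0) ^ 2 + ((p i - p 0) 1) ^ 2 = (r 0 + r i) ^ 2 := by
    intro i hi
    rw [← hnorm, hd i hi]
  -- complex numbers for the displacement vectors
  set z : Fin 8 → ℂ := fun i => ⟨(p i - p 0) 0, (p i - p 0) 1⟩ with hzdef
  have habs : ∀ i : Fin 8, i ≠ 0 → ‖z i‖ = r 0 + r i := by
    intro i hi
    rw [hzdef]
    simp only [Complex.norm_def, Complex.normSq_mk]
    have h := hd2 i hi
    rw [show (p i - p 0) 0 * (p i - p 0) 0 + (p i - p 0) 1 * (p i - p 0) 1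
        = (r 0 + r i) ^ 2 by nlinarith]
    exact Real.sqrt_sq (by linarith [hrpos 0, hrpos i])
  have hzne : ∀ i : Fin 8, i ≠ 0 → z i ≠ 0 := by
    intro i hi h
    have := habs i hi
    rw [h] at this
    simp at this
    linarith [hrpos 0, hrpos i]
  -- the key geometric inequality
  have key : ∀ i j : Fin 8, i ≠ 0 → j ≠ 0 → i ≠ j →
      Real.cos ((z i).arg - (z j).arg) < Real.cos δ := by
    intro i j hi hj hij
    have hzi := hzne i hi
    have hzj := hzne j hj
    have hA : (0:ℝ) < r 0 + r i := by linarith [hrpos 0, hrpos i]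
    have hB : (0:ℝ) < r 0 + r j := by linarith [hrpos 0, hrpos j]
    rw [Real.cos_sub, Complex.cos_arg hzi, Complex.sin_arg (z i),
      Complex.cos_arg hzj, Complex.sin_arg (z j), habs i hi, habs j hj]
    have hre_i : (z i).re = (p i - p 0) 0 := rfl
    have him_i : (z i).im = (p i - p 0) 1 := rfl
    have hre_j : (z j).re = (p j - p 0) 0 := rfl
    have him_j : (z j).im = (p j - p 0) 1 := rfl
    rw [hre_i, him_i, hre_j, him_j]
    set a0 := (p i - p 0) 0
    set a1 := (p i - p 0) 1
    set b0 := (p j - p 0) 0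
    set b1 := (p j - p 0) 1
    have heq : a0 / (r 0 + r i) * (b0 / (r 0 + r j)) + a1 / (r 0 + r i) * (b1 / (r 0 + r j))
        = (a0 * b0 + a1 * b1) / ((r 0 + r i) * (r 0 + r j)) := by
      field_simp
    rw [heq, div_lt_iff₀ (by positivity)]
    -- distance between pennies i and j
    have hsepij := hsep i j hij
    have hdist2 : (r i + r j) ^ 2 ≤ (a0 - b0) ^ 2 + (a1 - b1) ^ 2 := by
      have h1 : ‖p i - p j‖ ^ 2 = ((p i - p j) 0) ^ 2 + ((p i - p j) 1) ^ 2 := hnorm _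
      have h2 : p i - p j = (p i - p 0) - (p j - p 0) := by abel
      have h3 : (p i - p j) 0 = a0 - b0 := by rw [h2]; rfl
      have h4 : (p i - p j) 1 = a1 - b1 := by rw [h2]; rfl
      rw [h3, h4] at h1
      calc (r i + r j) ^ 2 ≤ ‖p i - p j‖ ^ 2 := by
            apply pow_le_pow_left₀ (by linarith [hrpos i, hrpos j]) hsepij
        _ = _ := h1
    have hcosδ : Real.cos δ = 1 - c ^ 2 / 2 := by linarith
    have hscal := penny_scalar ε c (r 0) (r i) (r j) hε hc0 hcε
      (hr 0).1 (hr 0).2 (hr i).1 (hr i).2 (hr j).1 (hr j).2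
    have hAi := hd2 i hi
    have hBj := hd2 j hj
    rw [hcosδ]
    nlinarith [hAi, hBj, hdist2, hscal]
  -- angles
  set α : Fin 8 → ℝ := fun i => (z i).arg with hαdef
  have hαlo : ∀ i, -Real.pi < α i := fun i => Complex.neg_pi_lt_arg _
  have hαhi : ∀ i, α i ≤ Real.pi := fun i => Complex.arg_le_pi _
  set γ : Fin 8 → ℝ := fun i => if α i - α 1 < 0 then α i - α 1 + 2 * Real.pi
      else α i - α 1 with hγdef
  have h10 : (1 : Fin 8) ≠ 0 := by decide
  have hγmem : ∀ i : Fin 8, i ≠ 0 → i ≠ 1 → δ < γ i ∧ γ i < 2 * Real.pi - δ := by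
    intro i hi hi1
    have hx : |α i - α 1| < 2 * Real.pi :=
      abs_lt.mpr ⟨by linarith [hαlo i, hαhi 1], by linarith [hαhi i, hαlo 1]⟩
    have hk := key i 1 hi h10 hi1
    have haux := cos_lt_cos_aux δ (α i - α 1) hδ0 hδπ hx hk
    rw [hγdef]
    simp only
    split_ifs with h
    · rw [abs_of_neg h] at haux
      exact ⟨by linarith [haux.2], by linarith [haux.1]⟩
    · rw [abs_of_nonneg (not_lt.1 h)] at haux
      exact haux
  have hγgap : ∀ i j : Fin 8, i ≠ 0 → j ≠ 0 → i ≠ 1 → j ≠ 1 → i ≠ j →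
      δ < |γ i - γ j| := by
    intro i j hi hj hi1 hj1 hij
    have hcoseq : Real.cos (γ i - γ j) = Real.cos (α i - α j) := by
      rw [hγdef]
      simp only
      split_ifs with h1 h2 h2
      · congr 1; ring
      · rw [show (α i - α 1 + 2 * Real.pi) - (α j - α 1) = (α i - α j) + 2 * Real.pi by ring,
          Real.cos_add_two_pi]
      · rw [show (α i - α 1) - (α j - α 1 + 2 * Real.pi) = (α i - α j) - 2 * Real.pi by ring,
          Real.cos_sub_two_pi]
      · congr 1; ring
    have hmi := hγmem i hi hi1
    have hmj := hγmem j hj hj1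
    have hx : |γ i - γ j| < 2 * Real.pi :=
      abs_lt.mpr ⟨by linarith [hmi.1, hmj.2], by linarith [hmi.2, hmj.1]⟩
    have hk : Real.cos (γ i - γ j) < Real.cos δ := by
      rw [hcoseq]; exact key i j hi hj hij
    exact (cos_lt_cos_aux δ (γ i - γ j) hδ0 hδπ hx hk).1
  -- pigeonhole
  set S : Finset (Fin 8) := {2, 3, 4, 5, 6, 7} with hSdef
  set T : Finset ℤ := {1, 2, 3, 4, 5} with hTdef
  have hST : ∀ i ∈ S, i ≠ 0 ∧ i ≠ 1 := by decide
  have hmaps : ∀ i ∈ S, ⌊γ i / δ⌋ ∈ T := by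
    intro i hi
    obtain ⟨hlo, hhi⟩ := hγmem i (hST i hi).1 (hST i hi).2
    have h7 : 2 * Real.pi = 7 * δ := by rw [hδdef]; ring
    have h1 : (1 : ℤ) ≤ ⌊γ i / δ⌋ := by
      apply Int.le_floor.mpr
      push_cast
      rw [le_div_iff₀ hδ0]
      linarith
    have h5 : ⌊γ i / δ⌋ < 6 := by
      apply Int.floor_lt.mpr
      push_cast
      rw [div_lt_iff₀ hδ0]
      linarith
    rw [hTdef]
    simp only [Finset.mem_insert, Finset.mem_singleton]
    omega
  have hcard : T.card < S.card := by rw [hSdef, hTdef]; decide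
  obtain ⟨i, hiS, j, hjS, hij, heq⟩ :=
    Finset.exists_ne_map_eq_of_card_lt_of_maps_to hcard hmaps
  have fi1 := Int.floor_le (γ i / δ)
  have fi2 := Int.lt_floor_add_one (γ i / δ)
  have fj1 := Int.floor_le (γ j / δ)
  have fj2 := Int.lt_floor_add_one (γ j / δ)
  rw [heq] at fi1 fi2
  have hratio : |γ i / δ - γ j / δ| < 1 := abs_lt.mpr ⟨by linarith, by linarith⟩
  have hsub : γ i / δ - γ j / δ = (γ i - γ j) / δ := by ring
  rw [hsub, abs_div, abs_of_pos hδ0, div_lt_one hδ0] at hratio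
  have := hγgap i j (hST i hiS).1 (hST j hjS).1 (hST i hiS).2 (hST j hjS).2 hij
  linarith
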